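/- Let 1−Q ≤ x < y < Q and assume ∫_y^Q φ(z) dz > 0 (so that 1−F₀(y) > 0). Then (1−F₁(x))/(1−F₀(x)) ≤ (1−F₁(y))/(1−F₀(y)); that is, the likelihood ratio x ↦ (1−F₁(x))/(1−F₀(x)) inferred from the event {type > x} is monotone nondecreasing on [1−Q, Q). -/

import Mathlib

open MeasureTheory intervalIntegral

/-- The likelihood ratio `x ↦ (1 − F₁(x))/(1 − F₀(x))` inferred from the
event `{type > x}` is monotone nondecreasing on `[1−Q, Q)`. -/
theorem invest_likelihood_ratio_monotone
    (Q : ℝ) (hQhalf : 1/2 < Q) (hQ1 : Q < 1)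
    (φ : ℝ → ℝ) (hφ_nonneg : ∀ z, 0 ≤ φ z)
    (hφ_int : Integrable φ)
    (hφ_supp : ∀ z, z < 1 - Q ∨ Q < z → φ z = 0)
    (F1 F0 : ℝ → ℝ)
    (hF1 : ∀ x, F1 x = ∫ y in (1 - Q)..x, y * φ y)
    (hF0 : ∀ x, F0 x = ∫ y in (1 - Q)..x, (1 - y) * φ y)
    (hF1Q : F1 Q = 1) (hF0Q : F0 Q = 1)
    (x y : ℝ) (hx : 1 - Q ≤ x) (hxy : x < y) (hyQ : y < Q)
    (hpos : 0 < ∫ z in y..Q, φ z) :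
    (1 - F1 x) / (1 - F0 x) ≤ (1 - F1 y) / (1 - F0 y) := by
  have hQ0 : 0 < 1 - Q := by linarith
  have hx0 : 0 < x := by linarith
  have hy0 : 0 < y := by linarith
  have hy1 : y < 1 := by linarith
  have hxy' : x ≤ y := hxy.le
  have hyQ' : y ≤ Q := hyQ.le
  have hxQ : x ≤ Q := le_trans hxy' hyQ'
  have hφi : ∀ a b : ℝ, IntervalIntegrable φ volume a b := fun a b =>
    hφ_int.intervalIntegrable
  have h1i : ∀ a b : ℝ, IntervalIntegrable (fun z => z * φ z) volume a b := fun a b =>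
    (hφi a b).continuousOn_mul continuous_id.continuousOn
  have h0i : ∀ a b : ℝ, IntervalIntegrable (fun z => (1 - z) * φ z) volume a b := fun a b =>
    (hφi a b).continuousOn_mul (by fun_prop : Continuous (fun z : ℝ => 1 - z)).continuousOn
  -- tail expressions
  have hG1x : 1 - F1 x = ∫ z in x..Q, z * φ z := by
    rw [← hF1Q, hF1, hF1, integral_interval_sub_left (h1i _ _) (h1i _ _)]
  have hG1y : 1 - F1 y = ∫ z in y..Q, z * φ z := by
    rw [← hF1Q, hF1, hF1, integral_interval_sub_left (h1i _ _) (h1i _ _)]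
  have hG0x : 1 - F0 x = ∫ z in x..Q, (1 - z) * φ z := by
    calc 1 - F0 x = F0 Q - F0 x := by rw [hF0Q]
    _ = _ := by rw [hF0, hF0, integral_interval_sub_left (h0i _ _) (h0i _ _)]
  have hG0y : 1 - F0 y = ∫ z in y..Q, (1 - z) * φ z := by
    calc 1 - F0 y = F0 Q - F0 y := by rw [hF0Q]
    _ = _ := by rw [hF0, hF0, integral_interval_sub_left (h0i _ _) (h0i _ _)]
  set A1 := ∫ z in x..y, z * φ z with hA1def
  set A0 := ∫ z in x..y, (1 - z) * φ z with hA0def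
  set G1 := ∫ z in y..Q, z * φ z with hG1def
  set G0 := ∫ z in y..Q, (1 - z) * φ z with hG0def
  set B := ∫ z in x..y, φ z with hBdef
  set C := ∫ z in y..Q, φ z with hCdef
  have hsplit1 : (∫ z in x..Q, z * φ z) = A1 + G1 :=
    (integral_add_adjacent_intervals (h1i x y) (h1i y Q)).symm
  have hsplit0 : (∫ z in x..Q, (1 - z) * φ z) = A0 + G0 :=
    (integral_add_adjacent_intervals (h0i x y) (h0i y Q)).symm
  -- nonnegativity facts
  have hB : 0 ≤ B := integral_nonneg hxy' (fun u _ => hφ_nonneg u)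
  have hA1 : 0 ≤ A1 := integral_nonneg hxy' (fun u hu =>
    mul_nonneg (by linarith [hu.1]) (hφ_nonneg u))
  have hA0 : 0 ≤ A0 := integral_nonneg hxy' (fun u hu =>
    mul_nonneg (by linarith [hu.2]) (hφ_nonneg u))
  have hG0nn : 0 ≤ G0 := integral_nonneg hyQ' (fun u hu =>
    mul_nonneg (by linarith [hu.2]) (hφ_nonneg u))
  -- comparison inequalities
  have hA1le : A1 ≤ y * B := by
    rw [hBdef, ← intervalIntegral.integral_const_mul]
    exact integral_mono_on hxy' (h1i x y) ((hφi x y).const_mul y)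
      (fun u hu => mul_le_mul_of_nonneg_right hu.2 (hφ_nonneg u))
  have hA0ge : (1 - y) * B ≤ A0 := by
    rw [hBdef, ← intervalIntegral.integral_const_mul]
    exact integral_mono_on hxy' ((hφi x y).const_mul (1 - y)) (h0i x y)
      (fun u hu => mul_le_mul_of_nonneg_right (by linarith [hu.2]) (hφ_nonneg u))
  have hG0le : G0 ≤ (1 - y) * C := by
    rw [hCdef, ← intervalIntegral.integral_const_mul]
    exact integral_mono_on hyQ' (h0i y Q) ((hφi y Q).const_mul (1 - y))
      (fun u hu => mul_le_mul_of_nonneg_right (by linarith [hu.1]) (hφ_nonneg u))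
  have hG1ge : y * C ≤ G1 := by
    rw [hCdef, ← intervalIntegral.integral_const_mul]
    exact integral_mono_on hyQ' ((hφi y Q).const_mul y) (h1i y Q)
      (fun u hu => mul_le_mul_of_nonneg_right hu.1 (hφ_nonneg u))
  have hG0geQ : (1 - Q) * C ≤ G0 := by
    rw [hCdef, ← intervalIntegral.integral_const_mul]
    exact integral_mono_on hyQ' ((hφi y Q).const_mul (1 - Q)) (h0i y Q)
      (fun u hu => mul_le_mul_of_nonneg_right (by linarith [hu.2]) (hφ_nonneg u))
  have hG0pos : 0 < G0 := lt_of_lt_of_le (mul_pos hQ0 hpos) hG0geQ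
  have hG0xpos : 0 < (1 : ℝ) - F0 x := by
    rw [hG0x, hsplit0]; linarith
  have hG0ypos : 0 < (1 : ℝ) - F0 y := by rw [hG0y]; exact hG0pos
  rw [div_le_div_iff₀ hG0xpos hG0ypos, hG1x, hG1y, hG0x, hG0y, hsplit1, hsplit0]
  -- key: A1 * G0 ≤ G1 * A0
  have key : A1 * G0 ≤ G1 * A0 := by
    have h1 : A1 * G0 ≤ (y * B) * ((1 - y) * C) :=
      mul_le_mul hA1le hG0le hG0nn (mul_nonneg hy0.le hB)
    have h2 : (y * C) * ((1 - y) * B) ≤ G1 * A0 :=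
      mul_le_mul hG1ge hA0ge (mul_nonneg (by linarith) hB) (le_trans (mul_nonneg hy0.le hpos.le) hG1ge)
    nlinarith
  nlinarith
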